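/- For all n ≥ 0, c_1²·α^n + c_2²·β^n + c_3²·γ^n + c_4²·δ^n = (1/563)·S_n, where S_n is the Tetranacci-type sequence with S_0 = 40, S_1 = 64, S_2 = 215, S_3 = 344 and S_n = S_{n−1} + S_{n−2} + S_{n−3} + S_{n−4} for n ≥ 4. -/
import Mathlib


/-- A Tetranacci-type sequence. -/
def seqS : ℕ → ℤ
  | 0 => 40
  | 1 => 64
  | 2 => 215
  | 3 => 344
  | n + 4 => seqS (n + 3) + seqS (n + 2) + seqS (n + 1) + seqS n

lemma aux0 (t : ℂ) (ht : t ^ 4 - t ^ 3 - t ^ 2 - t - 1 = 0)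
    (hd : 4 * t ^ 3 - 3 * t ^ 2 - 2 * t - 1 ≠ 0) :
    (t ^ 2 / (4 * t ^ 3 - 3 * t ^ 2 - 2 * t - 1)) ^ 2
      = (6 + 9 * t + 28 * t ^ 2 - 11 * t ^ 3) / 563 := by
  rw [div_pow, div_eq_div_iff (pow_ne_zero 2 hd) (by norm_num)]
  linear_combination (6 + 27*t + 91*t^2 + 91*t^3 - 536*t^4 + 176*t^5) * ht

lemma aux1 (t : ℂ) (ht : t ^ 4 - t ^ 3 - t ^ 2 - t - 1 = 0)
    (hd : 4 * t ^ 3 - 3 * t ^ 2 - 2 * t - 1 ≠ 0) :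
    (t ^ 2 / (4 * t ^ 3 - 3 * t ^ 2 - 2 * t - 1)) ^ 2 * t
      = (-11 - 5 * t - 2 * t ^ 2 + 17 * t ^ 3) / 563 := by
  rw [div_pow, div_mul_eq_mul_div, div_eq_div_iff (pow_ne_zero 2 hd) (by norm_num)]
  linear_combination (-11 - 38*t - 83*t^2 + 47*t^3 + 168*t^4 - 272*t^5) * ht

lemma aux2 (t : ℂ) (ht : t ^ 4 - t ^ 3 - t ^ 2 - t - 1 = 0)
    (hd : 4 * t ^ 3 - 3 * t ^ 2 - 2 * t - 1 ≠ 0) :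
    (t ^ 2 / (4 * t ^ 3 - 3 * t ^ 2 - 2 * t - 1)) ^ 2 * t ^ 2
      = (17 + 6 * t + 12 * t ^ 2 + 15 * t ^ 3) / 563 := by
  rw [div_pow, div_mul_eq_mul_div, div_eq_div_iff (pow_ne_zero 2 hd) (by norm_num)]
  linear_combination (17 + 57*t + 132*t^2 - 15*t^3 - 72*t^4 - 240*t^5) * ht

lemma aux3 (t : ℂ) (ht : t ^ 4 - t ^ 3 - t ^ 2 - t - 1 = 0)
    (hd : 4 * t ^ 3 - 3 * t ^ 2 - 2 * t - 1 ≠ 0) :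
    (t ^ 2 / (4 * t ^ 3 - 3 * t ^ 2 - 2 * t - 1)) ^ 2 * t ^ 3
      = (15 + 32 * t + 21 * t ^ 2 + 27 * t ^ 3) / 563 := by
  rw [div_pow, div_mul_eq_mul_div, div_eq_div_iff (pow_ne_zero 2 hd) (by norm_num)]
  linear_combination (15 + 77*t + 207*t^2 + 192*t^3 - 120*t^4 - 432*t^5) * ht

set_option maxHeartbeats 2000000 in
theorem tetra_c_sq (α β γ δ : ℂ)
    (hα : α ^ 4 - α ^ 3 - α ^ 2 - α - 1 = 0) (hβ : β ^ 4 - β ^ 3 - β ^ 2 - β - 1 = 0)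
    (hγ : γ ^ 4 - γ ^ 3 - γ ^ 2 - γ - 1 = 0) (hδ : δ ^ 4 - δ ^ 3 - δ ^ 2 - δ - 1 = 0)
    (hαβ : α ≠ β) (hαγ : α ≠ γ) (hαδ : α ≠ δ) (hβγ : β ≠ γ) (hβδ : β ≠ δ) (hγδ : γ ≠ δ)
    (c₁ c₂ c₃ c₄ : ℂ)
    (hc₁ : c₁ = α ^ 2 / ((α - β) * (α - γ) * (α - δ)))
    (hc₂ : c₂ = β ^ 2 / ((β - α) * (β - γ) * (β - δ)))
    (hc₃ : c₃ = γ ^ 2 / ((γ - α) * (γ - β) * (γ - δ)))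
    (hc₄ : c₄ = δ ^ 2 / ((δ - α) * (δ - β) * (δ - γ))) (n : ℕ) :
    c₁ ^ 2 * α ^ n + c₂ ^ 2 * β ^ n + c₃ ^ 2 * γ ^ n + c₄ ^ 2 * δ ^ n
      = (1 / 563 : ℂ) * seqS n := by
  -- nonzero differences
  have dαβ : α - β ≠ 0 := sub_ne_zero.mpr hαβ
  have dαγ : α - γ ≠ 0 := sub_ne_zero.mpr hαγ
  have dαδ : α - δ ≠ 0 := sub_ne_zero.mpr hαδ
  have dβγ : β - γ ≠ 0 := sub_ne_zero.mpr hβγ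
  have dβδ : β - δ ≠ 0 := sub_ne_zero.mpr hβδ
  have dγδ : γ - δ ≠ 0 := sub_ne_zero.mpr hγδ
  -- divided differences of p
  have hab : α^3+α^2*β+α*β^2+β^3 = α^2+α*β+β^2+α+β+1 := by
    apply mul_left_cancel₀ dαβ; linear_combination hα - hβ
  have hac : α^3+α^2*γ+α*γ^2+γ^3 = α^2+α*γ+γ^2+α+γ+1 := by
    apply mul_left_cancel₀ dαγ; linear_combination hα - hγ
  have had : α^3+α^2*δ+α*δ^2+δ^3 = α^2+α*δ+δ^2+α+δ+1 := by
    apply mul_left_cancel₀ dαδ; linear_combination hα - hδ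
  have habc : α^2+α*β+α*γ+β^2+β*γ+γ^2 = α+β+γ+1 := by
    apply mul_left_cancel₀ dβγ; linear_combination hab - hac
  have habd : α^2+α*β+α*δ+β^2+β*δ+δ^2 = α+β+δ+1 := by
    apply mul_left_cancel₀ dβδ; linear_combination hab - had
  have he1 : α+β+γ+δ = 1 := by
    apply mul_left_cancel₀ dγδ; linear_combination habc - habd
  -- divided differences of x*p
  have hab2 : α^4+α^3*β+α^2*β^2+α*β^3+β^4
      = α^3+α^2*β+α*β^2+β^3+α^2+α*β+β^2+α+β+1 := by
    apply mul_left_cancel₀ dαβ; linear_combination α*hα - β*hβ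
  have hac2 : α^4+α^3*γ+α^2*γ^2+α*γ^3+γ^4
      = α^3+α^2*γ+α*γ^2+γ^3+α^2+α*γ+γ^2+α+γ+1 := by
    apply mul_left_cancel₀ dαγ; linear_combination α*hα - γ*hγ
  have had2 : α^4+α^3*δ+α^2*δ^2+α*δ^3+δ^4
      = α^3+α^2*δ+α*δ^2+δ^3+α^2+α*δ+δ^2+α+δ+1 := by
    apply mul_left_cancel₀ dαδ; linear_combination α*hα - δ*hδ
  have habc2 : α^3+β^3+γ^3+α^2*β+α^2*γ+α*β^2+β^2*γ+α*γ^2+β*γ^2+α*β*γ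
      = α^2+β^2+γ^2+α*β+α*γ+β*γ+α+β+γ+1 := by
    apply mul_left_cancel₀ dβγ; linear_combination hab2 - hac2
  have habd2 : α^3+β^3+δ^3+α^2*β+α^2*δ+α*β^2+β^2*δ+α*δ^2+β*δ^2+α*β*δ
      = α^2+β^2+δ^2+α*β+α*δ+β*δ+α+β+δ+1 := by
    apply mul_left_cancel₀ dβδ; linear_combination hab2 - had2
  have hq : α^2+β^2+γ^2+δ^2+α*β+α*γ+α*δ+β*γ+β*δ+γ*δ = α+β+γ+δ+1 := by
    apply mul_left_cancel₀ dγδ; linear_combination habc2 - habd2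
  have he2 : α*β+α*γ+α*δ+β*γ+β*δ+γ*δ = -1 := by
    linear_combination (α+β+γ+δ)*he1 - hq
  -- divided differences of x^2*p
  have hab3 : α^5+α^4*β+α^3*β^2+α^2*β^3+α*β^4+β^5
      = α^4+α^3*β+α^2*β^2+α*β^3+β^4+α^3+α^2*β+α*β^2+β^3+α^2+α*β+β^2+α+β := by
    apply mul_left_cancel₀ dαβ; linear_combination α^2*hα - β^2*hβ
  have hac3 : α^5+α^4*γ+α^3*γ^2+α^2*γ^3+α*γ^4+γ^5
      = α^4+α^3*γ+α^2*γ^2+α*γ^3+γ^4+α^3+α^2*γ+α*γ^2+γ^3+α^2+α*γ+γ^2+α+γ := by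
    apply mul_left_cancel₀ dαγ; linear_combination α^2*hα - γ^2*hγ
  have had3 : α^5+α^4*δ+α^3*δ^2+α^2*δ^3+α*δ^4+δ^5
      = α^4+α^3*δ+α^2*δ^2+α*δ^3+δ^4+α^3+α^2*δ+α*δ^2+δ^3+α^2+α*δ+δ^2+α+δ := by
    apply mul_left_cancel₀ dαδ; linear_combination α^2*hα - δ^2*hδ
  have habc3 : α^4+β^4+γ^4+α^3*β+α^3*γ+α*β^3+β^3*γ+α*γ^3+β*γ^3
        +α^2*β^2+α^2*γ^2+β^2*γ^2+α^2*β*γ+α*β^2*γ+α*β*γ^2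
      = α^3+β^3+γ^3+α^2*β+α^2*γ+α*β^2+β^2*γ+α*γ^2+β*γ^2+α*β*γ
        +α^2+β^2+γ^2+α*β+α*γ+β*γ+α+β+γ+1 := by
    apply mul_left_cancel₀ dβγ; linear_combination hab3 - hac3
  have habd3 : α^4+β^4+δ^4+α^3*β+α^3*δ+α*β^3+β^3*δ+α*δ^3+β*δ^3
        +α^2*β^2+α^2*δ^2+β^2*δ^2+α^2*β*δ+α*β^2*δ+α*β*δ^2
      = α^3+β^3+δ^3+α^2*β+α^2*δ+α*β^2+β^2*δ+α*δ^2+β*δ^2+α*β*δ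
        +α^2+β^2+δ^2+α*β+α*δ+β*δ+α+β+δ+1 := by
    apply mul_left_cancel₀ dβδ; linear_combination hab3 - had3
  have hr : α^3+β^3+γ^3+δ^3+α^2*β+α^2*γ+α^2*δ+α*β^2+β^2*γ+β^2*δ
        +α*γ^2+β*γ^2+γ^2*δ+α*δ^2+β*δ^2+γ*δ^2+α*β*γ+α*β*δ+α*γ*δ+β*γ*δ
      = α^2+β^2+γ^2+δ^2+α*β+α*γ+α*δ+β*γ+β*δ+γ*δ+α+β+γ+δ+1 := by
    apply mul_left_cancel₀ dγδ; linear_combination habc3 - habd3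
  have he3 : α*β*γ+α*β*δ+α*γ*δ+β*γ*δ = 1 := by
    linear_combination hr - ((α+β+γ+δ)^2+1)*he1 - (1-2*(α+β+γ+δ))*he2
  -- power sums
  have hp2 : α^2+β^2+γ^2+δ^2 = 3 := by
    linear_combination (α+β+γ+δ+1)*he1 - 2*he2
  have hp3 : α^3+β^3+γ^3+δ^3 = 7 := by
    linear_combination ((α+β+γ+δ)^2+(α+β+γ+δ)+4)*he1 - 3*(α+β+γ+δ)*he2 + 3*he3
  -- denominators equal derivative values
  have hdα : (α - β) * (α - γ) * (α - δ) = 4*α^3-3*α^2-2*α-1 := by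
    linear_combination (-3*α^2)*he1 + 2*α*he2 - he3
  have hdβ : (β - α) * (β - γ) * (β - δ) = 4*β^3-3*β^2-2*β-1 := by
    linear_combination (-3*β^2)*he1 + 2*β*he2 - he3
  have hdγ : (γ - α) * (γ - β) * (γ - δ) = 4*γ^3-3*γ^2-2*γ-1 := by
    linear_combination (-3*γ^2)*he1 + 2*γ*he2 - he3
  have hdδ : (δ - α) * (δ - β) * (δ - γ) = 4*δ^3-3*δ^2-2*δ-1 := by
    linear_combination (-3*δ^2)*he1 + 2*δ*he2 - he3
  have hnα : 4*α^3-3*α^2-2*α-1 ≠ 0 := by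
    rw [← hdα]; exact mul_ne_zero (mul_ne_zero dαβ dαγ) dαδ
  have hnβ : 4*β^3-3*β^2-2*β-1 ≠ 0 := by
    rw [← hdβ]
    exact mul_ne_zero (mul_ne_zero (sub_ne_zero.mpr hαβ.symm) dβγ) dβδ
  have hnγ : 4*γ^3-3*γ^2-2*γ-1 ≠ 0 := by
    rw [← hdγ]
    exact mul_ne_zero (mul_ne_zero (sub_ne_zero.mpr hαγ.symm) (sub_ne_zero.mpr hβγ.symm)) dγδ
  have hnδ : 4*δ^3-3*δ^2-2*δ-1 ≠ 0 := by
    rw [← hdδ]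
    exact mul_ne_zero (mul_ne_zero (sub_ne_zero.mpr hαδ.symm)
      (sub_ne_zero.mpr hβδ.symm)) (sub_ne_zero.mpr hγδ.symm)
  rw [hc₁, hc₂, hc₃, hc₄, hdα, hdβ, hdγ, hdδ]
  -- base cases
  have b0 : (α^2/(4*α^3-3*α^2-2*α-1))^2 * α^0 + (β^2/(4*β^3-3*β^2-2*β-1))^2 * β^0
      + (γ^2/(4*γ^3-3*γ^2-2*γ-1))^2 * γ^0 + (δ^2/(4*δ^3-3*δ^2-2*δ-1))^2 * δ^0
      = (1/563 : ℂ) * seqS 0 := by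
    simp only [seqS]; push_cast
    linear_combination aux0 α hα hnα + aux0 β hβ hnβ + aux0 γ hγ hnγ + aux0 δ hδ hnδ
      + (9/563)*he1 + (28/563)*hp2 - (11/563)*hp3
  have b1 : (α^2/(4*α^3-3*α^2-2*α-1))^2 * α^1 + (β^2/(4*β^3-3*β^2-2*β-1))^2 * β^1
      + (γ^2/(4*γ^3-3*γ^2-2*γ-1))^2 * γ^1 + (δ^2/(4*δ^3-3*δ^2-2*δ-1))^2 * δ^1
      = (1/563 : ℂ) * seqS 1 := by
    simp only [seqS]; push_cast
    linear_combination aux1 α hα hnα + aux1 β hβ hnβ + aux1 γ hγ hnγ + aux1 δ hδ hnδ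
      - (5/563)*he1 - (2/563)*hp2 + (17/563)*hp3
  have b2 : (α^2/(4*α^3-3*α^2-2*α-1))^2 * α^2 + (β^2/(4*β^3-3*β^2-2*β-1))^2 * β^2
      + (γ^2/(4*γ^3-3*γ^2-2*γ-1))^2 * γ^2 + (δ^2/(4*δ^3-3*δ^2-2*δ-1))^2 * δ^2
      = (1/563 : ℂ) * seqS 2 := by
    simp only [seqS]; push_cast
    linear_combination aux2 α hα hnα + aux2 β hβ hnβ + aux2 γ hγ hnγ + aux2 δ hδ hnδ
      + (6/563)*he1 + (12/563)*hp2 + (15/563)*hp3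
  have b3 : (α^2/(4*α^3-3*α^2-2*α-1))^2 * α^3 + (β^2/(4*β^3-3*β^2-2*β-1))^2 * β^3
      + (γ^2/(4*γ^3-3*γ^2-2*γ-1))^2 * γ^3 + (δ^2/(4*δ^3-3*δ^2-2*δ-1))^2 * δ^3
      = (1/563 : ℂ) * seqS 3 := by
    simp only [seqS]; push_cast
    linear_combination aux3 α hα hnα + aux3 β hβ hnβ + aux3 γ hγ hnγ + aux3 δ hδ hnδ
      + (32/563)*he1 + (21/563)*hp2 + (27/563)*hp3
  -- induction with a window of four
  set F : ℕ → Prop := fun m =>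
    (α^2/(4*α^3-3*α^2-2*α-1))^2 * α^m + (β^2/(4*β^3-3*β^2-2*β-1))^2 * β^m
      + (γ^2/(4*γ^3-3*γ^2-2*γ-1))^2 * γ^m + (δ^2/(4*δ^3-3*δ^2-2*δ-1))^2 * δ^m
      = (1/563 : ℂ) * seqS m with hF
  have step : ∀ m : ℕ, F m → F (m+1) → F (m+2) → F (m+3) → F (m+4) := by
    intro m i0 i1 i2 i3
    rw [hF] at i0 i1 i2 i3 ⊢
    simp only [seqS]
    push_cast
    linear_combination i0 + i1 + i2 + i3
      + (α^2/(4*α^3-3*α^2-2*α-1))^2 * α^m * hα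
      + (β^2/(4*β^3-3*β^2-2*β-1))^2 * β^m * hβ
      + (γ^2/(4*γ^3-3*γ^2-2*γ-1))^2 * γ^m * hγ
      + (δ^2/(4*δ^3-3*δ^2-2*δ-1))^2 * δ^m * hδ
  have key : ∀ m : ℕ, F m ∧ F (m+1) ∧ F (m+2) ∧ F (m+3) := by
    intro m
    induction m with
    | zero => exact ⟨b0, b1, b2, b3⟩
    | succ k ih => exact ⟨ih.2.1, ih.2.2.1, ih.2.2.2, step k ih.1 ih.2.1 ih.2.2.1 ih.2.2.2⟩
  exact (key n).1
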